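/- arXiv:2404.07189 — 10 statements merged into one kernel-verified Lean document; each statement's English description precedes it below -/
import Mathlib

section
/- Let R be a finite ring with identity in which 2 is not a unit. A subset A of R is a maximal independent set of the unit graph of R if and only if the image of A in R/J(R) is a maximal independent set of the unit graph of R/J(R) and A = A + J(R). -/
open Pointwise

/-- The unit graph of a ring: distinct `x, y` adjacent iff `x + y` is a unit. -/
def unitGraph (R : Type*) [Ring R] : SimpleGraph R where
  Adj x y := x ≠ y ∧ IsUnit (x + y)
  symm := by
    constructor
    rintro x y ⟨h1, h2⟩
    exact ⟨h1.symm, by rwa [add_comm]⟩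
  loopless := by constructor; rintro x ⟨h, _⟩; exact h rfl

/-- The unitary Cayley graph of a ring: distinct `x, y` adjacent iff `x - y` is a unit. -/
def cayleyGraph (R : Type*) [Ring R] : SimpleGraph R where
  Adj x y := x ≠ y ∧ IsUnit (x - y)
  symm := by
    constructor
    rintro x y ⟨h1, h2⟩
    refine ⟨h1.symm, ?_⟩
    rw [← neg_sub]
    exact h2.neg
  loopless := by constructor; rintro x ⟨h, _⟩; exact h rfl

/-- A set of vertices is independent if no two of its elements are adjacent. -/
def IsIndepSet {V : Type*} (G : SimpleGraph V) (A : Set V) : Prop :=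
  ∀ ⦃x⦄, x ∈ A → ∀ ⦃y⦄, y ∈ A → ¬ G.Adj x y

/-- A maximal independent set. -/
def IsMaxIndepSet {V : Type*} (G : SimpleGraph V) (A : Set V) : Prop :=
  IsIndepSet G A ∧ ∀ B, IsIndepSet G B → A ⊆ B → A = B

/-- A graph is well-covered if all maximal independent sets have the same cardinality. -/
def WellCovered {V : Type*} (G : SimpleGraph V) : Prop :=
  ∀ A B : Set V, IsMaxIndepSet G A → IsMaxIndepSet G B → A.ncard = B.ncard

theorem myIsUnit_of_sub_one_mem_jacobson {R : Type*} [Ring R] (r : R)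
    (h : r - 1 ∈ Ideal.jacobson (⊥ : Ideal R)) : IsUnit r := by
  obtain ⟨s, hs⟩ := Ideal.exists_mul_sub_mem_of_sub_one_mem_jacobson r h
  rw [Ideal.mem_bot, sub_eq_zero] at hs
  have hsJ : s - 1 ∈ Ideal.jacobson (⊥ : Ideal R) := by
    have : s - 1 = -(s * (r - 1)) := by rw [mul_sub, mul_one, hs]; abel
    rw [this]
    exact neg_mem (Ideal.mul_mem_left _ s h)
  obtain ⟨t, ht⟩ := Ideal.exists_mul_sub_mem_of_sub_one_mem_jacobson s hsJ
  rw [Ideal.mem_bot, sub_eq_zero] at ht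
  have htr : t = r := by
    calc t = t * (s * r) := by rw [hs, mul_one]
    _ = (t * s) * r := by rw [mul_assoc]
    _ = r := by rw [ht, one_mul]
  exact ⟨⟨r, s, by rw [← htr]; exact ht, hs⟩, rfl⟩

theorem myUnit_add_jacobson {R : Type*} [Ring R] {u j : R} (hu : IsUnit u)
    (hj : j ∈ Ideal.jacobson (⊥ : Ideal R)) : IsUnit (u + j) := by
  obtain ⟨v, rfl⟩ := hu
  have : (v : R) + j = (v : R) * (1 + (↑v⁻¹ : R) * j) := by
    rw [mul_add, mul_one, ← mul_assoc, Units.mul_inv, one_mul]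
  rw [this]
  exact (Units.isUnit v).mul (myIsUnit_of_sub_one_mem_jacobson _
    (by rw [add_sub_cancel_left]; exact Ideal.mul_mem_left _ _ hj))

theorem myUnit_lift {R : Type*} [Ring R] {S : Type*} [Ring S] (π : R →+* S)
    (hsurj : Function.Surjective π)
    (hker : RingHom.ker π = Ideal.jacobson (⊥ : Ideal R)) {x : R}
    (h : IsUnit (π x)) : IsUnit x := by
  obtain ⟨v, hv⟩ := h
  obtain ⟨y, hy⟩ := hsurj (↑v⁻¹ : S)
  have hxy : IsUnit (x * y) := by
    apply myIsUnit_of_sub_one_mem_jacobson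
    rw [← hker, RingHom.mem_ker, map_sub, map_mul, hy, ← hv, Units.mul_inv, map_one, sub_self]
  have hyx : IsUnit (y * x) := by
    apply myIsUnit_of_sub_one_mem_jacobson
    rw [← hker, RingHom.mem_ker, map_sub, map_mul, hy, ← hv, Units.inv_mul, map_one, sub_self]
  obtain ⟨a, ha⟩ := hxy
  obtain ⟨b, hb⟩ := hyx
  have step0 : (↑b⁻¹ : R) * (y * x) = 1 := by rw [← hb, Units.inv_mul]
  refine ⟨⟨x, y * ↑a⁻¹, ?_, ?_⟩, rfl⟩
  · rw [← mul_assoc, ← ha, Units.mul_inv]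
  · calc y * (↑a⁻¹ : R) * x
        = ↑b⁻¹ * (y * x) * (y * ↑a⁻¹ * x) := by rw [step0, one_mul]
    _ = ↑b⁻¹ * (y * (x * y) * (↑a⁻¹ * x)) := by simp only [mul_assoc]
    _ = ↑b⁻¹ * (y * ↑a * (↑a⁻¹ * x)) := by rw [← ha]
    _ = ↑b⁻¹ * (y * (↑a * ↑a⁻¹) * x) := by simp only [mul_assoc]
    _ = ↑b⁻¹ * (y * x) := by rw [Units.mul_inv, mul_one]
    _ = 1 := step0

theorem stmt_0 {R : Type*} [Ring R] [Finite R] (h2 : ¬ IsUnit (2 : R))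
    {S : Type*} [Ring S] (π : R →+* S) (hsurj : Function.Surjective π)
    (hker : RingHom.ker π = Ideal.jacobson (⊥ : Ideal R)) (A : Set R) :
    IsMaxIndepSet (unitGraph R) A ↔
      IsMaxIndepSet (unitGraph S) (π '' A) ∧
        A = A + ((Ideal.jacobson (⊥ : Ideal R) : Ideal R) : Set R) := by
  have hkermem : ∀ {z : R}, π z = 0 → z ∈ Ideal.jacobson (⊥ : Ideal R) := by
    intro z hz; rw [← hker]; exact hz
  have hAdjIff : ∀ x y : R, (unitGraph R).Adj x y ↔ (unitGraph S).Adj (π x) (π y) := by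
    intro x y
    constructor
    · rintro ⟨hxy, hu⟩
      refine ⟨?_, by rw [← map_add]; exact hu.map π⟩
      intro hpxy
      have hmem : x - y ∈ Ideal.jacobson (⊥ : Ideal R) :=
        hkermem (by rw [map_sub, hpxy, sub_self])
      have h2y : IsUnit (2 * y) := by
        have h1 : (2 : R) * y = (x + y) + (-(x - y)) := by rw [two_mul]; abel
        rw [h1]; exact myUnit_add_jacobson hu (neg_mem hmem)
      apply h2
      obtain ⟨w, hw⟩ := h2y
      refine ⟨⟨2, y * ↑w⁻¹, ?_, ?_⟩, rfl⟩
      · rw [← mul_assoc, ← hw, Units.mul_inv]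
      · rw [mul_two, ← two_mul, ← mul_assoc, ← hw, Units.mul_inv]
    · rintro ⟨hne, hu⟩
      refine ⟨fun h => hne (by rw [h]), ?_⟩
      rw [← map_add] at hu
      exact myUnit_lift π hsurj hker hu
  constructor
  · rintro ⟨hind, hmax⟩
    have hclosed : A = A + ((Ideal.jacobson (⊥ : Ideal R) : Ideal R) : Set R) := by
      apply Set.Subset.antisymm
      · intro a ha
        have := Set.add_mem_add ha
          (show (0 : R) ∈ ((Ideal.jacobson (⊥ : Ideal R) : Ideal R) : Set R) from
            (Ideal.jacobson (⊥ : Ideal R)).zero_mem)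
        simpa using this
      · rintro z hz
        obtain ⟨a, ha, j, hj, rfl⟩ := Set.mem_add.mp hz
        have hj' : j ∈ Ideal.jacobson (⊥ : Ideal R) := hj
        have hpaj : π (a + j) = π a := by
          have : π j = 0 := by rw [← RingHom.mem_ker, hker]; exact hj'
          rw [map_add, this, add_zero]
        have hindB : IsIndepSet (unitGraph R) (insert (a + j) A) := by
          intro x hx y hy hadj
          rcases Set.mem_insert_iff.mp hx with rfl | hx <;> rcases Set.mem_insert_iff.mp hy with rfl | hy
          · exact hadj.1 rfl
          · have h' := (hAdjIff _ _).mp hadj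
            rw [hpaj] at h'
            exact hind ha hy ((hAdjIff a _).mpr h')
          · have h' := (hAdjIff _ _).mp hadj
            rw [hpaj] at h'
            exact hind hx ha ((hAdjIff _ a).mpr h')
          · exact hind hx hy hadj
        have hA := hmax _ hindB (Set.subset_insert _ _)
        rw [hA]
        exact Set.mem_insert _ _
    refine ⟨⟨?_, ?_⟩, hclosed⟩
    · rintro _ ⟨a, ha, rfl⟩ _ ⟨b, hb, rfl⟩ hadj
      exact hind ha hb ((hAdjIff a b).mpr hadj)
    · intro B hB hsub
      apply Set.Subset.antisymm hsub
      intro s hs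
      have hindB : IsIndepSet (unitGraph R) (A ∪ π ⁻¹' {s}) := by
        intro x hx y hy hadj
        have hadj' := (hAdjIff x y).mp hadj
        rcases hx with hx | hx <;> rcases hy with hy | hy
        · exact hind hx hy hadj
        · have hy' : π y = s := hy
          rw [hy'] at hadj'
          exact hB (hsub ⟨x, hx, rfl⟩) hs hadj'
        · have hx' : π x = s := hx
          rw [hx'] at hadj'
          exact hB hs (hsub ⟨y, hy, rfl⟩) hadj'
        · have hx' : π x = s := hx
          have hy' : π y = s := hy
          exact hadj'.1 (by rw [hx', hy'])
      have hAeq := hmax _ hindB Set.subset_union_left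
      obtain ⟨r, hr⟩ := hsurj s
      have hrA : r ∈ A := by
        rw [hAeq]
        exact Or.inr (by simp [hr])
      exact ⟨r, hrA, hr⟩
  · rintro ⟨⟨hindS, hmaxS⟩, hclosed⟩
    have hind : IsIndepSet (unitGraph R) A := fun x hx y hy hadj =>
      hindS (Set.mem_image_of_mem π hx) (Set.mem_image_of_mem π hy) ((hAdjIff x y).mp hadj)
    refine ⟨hind, ?_⟩
    intro B hB hsub
    apply Set.Subset.antisymm hsub
    intro b hb
    have hindS' : IsIndepSet (unitGraph S) (insert (π b) (π '' A)) := by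
      intro x hx y hy hadj
      rcases Set.mem_insert_iff.mp hx with rfl | ⟨p, hp, rfl⟩ <;> rcases Set.mem_insert_iff.mp hy with rfl | ⟨q, hq, rfl⟩
      · exact hadj.1 rfl
      · exact hB hb (hsub hq) ((hAdjIff b q).mpr hadj)
      · exact hB (hsub hp) hb ((hAdjIff p b).mpr hadj)
      · exact hindS ⟨p, hp, rfl⟩ ⟨q, hq, rfl⟩ hadj
    have hPeq := hmaxS _ hindS' (Set.subset_insert _ _)
    have hπb : π b ∈ π '' A := by rw [hPeq]; exact Set.mem_insert _ _
    obtain ⟨a, ha, hab⟩ := hπb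
    have hba : b - a ∈ Ideal.jacobson (⊥ : Ideal R) :=
      hkermem (by rw [map_sub, hab, sub_self])
    have hbeq : b = a + (b - a) := by abel
    rw [hclosed, hbeq]
    exact Set.add_mem_add ha hba
end

section
/- Let R be a finite ring with identity in which 2 is not a unit. Then the unit graph of R is well-covered if and only if the unit graph of R/J(R) is well-covered. -/
open Pointwise

section Aux

lemma aux_mul_comm_one {M : Type*} [Monoid M] [Finite M] {a b : M} (h : a * b = 1) :
    b * a = 1 := by
  have hs : Function.Surjective (fun x => a * x) := fun x =>
    ⟨b * x, by simp only [← mul_assoc, h, one_mul]⟩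
  have hi : Function.Injective (fun x => a * x) := Finite.injective_iff_surjective.2 hs
  have : a * (b * a) = a * 1 := by rw [← mul_assoc, h, one_mul, mul_one]
  exact hi this

lemma aux_isUnit_map_iff {R S : Type*} [Ring R] [Finite R] [Ring S] (π : R →+* S)
    (hsurj : Function.Surjective π)
    (hker : RingHom.ker π = Ideal.jacobson (⊥ : Ideal R)) (a : R) :
    IsUnit (π a) ↔ IsUnit a := by
  constructor
  · rintro ⟨u, hu⟩
    obtain ⟨b, hb⟩ := hsurj ↑u⁻¹
    have h1 : π (b * a) = 1 := by rw [map_mul, hb, ← hu, Units.inv_mul]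
    have hmem : b * a - 1 ∈ RingHom.ker π := by
      rw [RingHom.mem_ker, map_sub, h1, map_one, sub_self]
    rw [hker] at hmem
    obtain ⟨s, hs⟩ := Ideal.exists_mul_sub_mem_of_sub_one_mem_jacobson _ hmem
    rw [Ideal.mem_bot, sub_eq_zero] at hs
    have h2 : (s * b) * a = 1 := by rw [mul_assoc]; exact hs
    exact ⟨⟨a, s * b, aux_mul_comm_one h2, h2⟩, rfl⟩
  · exact fun h => h.map π

lemma aux_not_unit_double {R : Type*} [Ring R] [Finite R] (h2 : ¬ IsUnit (2 : R)) (x : R) :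
    ¬ IsUnit (x + x) := by
  intro h
  rw [← mul_two] at h
  obtain ⟨u, hu⟩ := h
  have h1 : (↑u⁻¹ * x) * 2 = 1 := by rw [mul_assoc, ← hu, Units.inv_mul]
  exact h2 ⟨⟨2, ↑u⁻¹ * x, aux_mul_comm_one h1, h1⟩, rfl⟩

end Aux

theorem stmt_1 {R : Type*} [Ring R] [Finite R] (h2 : ¬ IsUnit (2 : R))
    {S : Type*} [Ring S] (π : R →+* S) (hsurj : Function.Surjective π)
    (hker : RingHom.ker π = Ideal.jacobson (⊥ : Ideal R)) :
    WellCovered (unitGraph R) ↔ WellCovered (unitGraph S) := by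
  haveI : Finite S := Finite.of_surjective π hsurj
  have hu : ∀ a : R, IsUnit (π a) ↔ IsUnit a := aux_isUnit_map_iff π hsurj hker
  have h2S : ¬ IsUnit (2 : S) := by
    intro h
    apply h2
    rw [← hu 2]
    rwa [map_ofNat]
  -- independence transfers
  have hind_im : ∀ A : Set R, IsIndepSet (unitGraph R) A →
      IsIndepSet (unitGraph S) (π '' A) := by
    rintro A hA _ ⟨x, hx, rfl⟩ _ ⟨y, hy, rfl⟩ ⟨hne, hunit⟩
    have hxy : x ≠ y := fun h => hne (by rw [h])
    exact hA hx hy ⟨hxy, (hu (x + y)).1 (by rwa [map_add])⟩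
  have hind_pre : ∀ B : Set S, IsIndepSet (unitGraph S) B →
      IsIndepSet (unitGraph R) (π ⁻¹' B) := by
    rintro B hB x hx y hy ⟨hne, hunit⟩
    have hus : IsUnit (π x + π y) := by rw [← map_add]; exact (hu _).2 hunit
    by_cases hpi : π x = π y
    · rw [hpi] at hus
      exact aux_not_unit_double h2S _ hus
    · exact hB hx hy ⟨hpi, hus⟩
  -- maximality transfers
  have hmax_im : ∀ A, IsMaxIndepSet (unitGraph R) A →
      IsMaxIndepSet (unitGraph S) (π '' A) ∧ A = π ⁻¹' (π '' A) := by
    rintro A ⟨hA, hAmax⟩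
    have hAeq : A = π ⁻¹' (π '' A) :=
      hAmax _ (hind_pre _ (hind_im _ hA)) (Set.subset_preimage_image π A)
    refine ⟨⟨hind_im _ hA, ?_⟩, hAeq⟩
    intro B hB hAB
    have hAB' : A = π ⁻¹' B := by
      apply hAmax _ (hind_pre _ hB)
      exact hAeq.le.trans (Set.preimage_mono hAB)
    rw [hAB', Set.image_preimage_eq B hsurj]
  have hmax_pre : ∀ B, IsMaxIndepSet (unitGraph S) B →
      IsMaxIndepSet (unitGraph R) (π ⁻¹' B) := by
    rintro B ⟨hB, hBmax⟩
    refine ⟨hind_pre _ hB, ?_⟩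
    intro C hC hBC
    have h1 : B = π '' C := by
      apply hBmax _ (hind_im _ hC)
      rw [← Set.image_preimage_eq B hsurj]
      exact Set.image_mono hBC
    have h3 : C ⊆ π ⁻¹' B := by rw [h1]; exact Set.subset_preimage_image π C
    exact Set.Subset.antisymm hBC h3
  -- cardinality of preimages
  have hcard : ∀ B : Set S, (π ⁻¹' B).ncard = Nat.card (RingHom.ker π) * B.ncard := by
    intro B
    rw [← Nat.card_coe_set_eq, ← Nat.card_coe_set_eq]
    have hσ : ∀ s, π (Function.surjInv hsurj s) = s := Function.surjInv_eq hsurj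
    have e : (π ⁻¹' B) ≃ (RingHom.ker π) × B :=
      { toFun := fun x => (⟨x.1 - Function.surjInv hsurj (π x.1), by
          rw [RingHom.mem_ker, map_sub, hσ, sub_self]⟩, ⟨π x.1, x.2⟩)
        invFun := fun p => ⟨Function.surjInv hsurj p.2.1 + p.1.1, by
          have hk : π p.1.1 = 0 := RingHom.mem_ker.mp p.1.2
          simp only [Set.mem_preimage, map_add, hσ, hk, add_zero]
          exact p.2.2⟩
        left_inv := fun x => by
          apply Subtype.ext
          simp only [add_sub_cancel]
        right_inv := fun p => by
          have hk : π p.1.1 = 0 := RingHom.mem_ker.mp p.1.2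
          have hπ : π (Function.surjInv hsurj p.2.1 + p.1.1) = p.2.1 := by
            rw [map_add, hσ, hk, add_zero]
          ext
          · simp only [hπ, add_sub_cancel_left]
          · simp only [hπ] }
    rw [Nat.card_congr e, Nat.card_prod]
  have hk0 : Nat.card (RingHom.ker π) ≠ 0 := Nat.card_pos.ne'
  constructor
  · intro hR B B' hB hB'
    have h := hR _ _ (hmax_pre _ hB) (hmax_pre _ hB')
    rw [hcard, hcard] at h
    exact Nat.eq_of_mul_eq_mul_left (Nat.pos_of_ne_zero hk0) h
  · intro hS A A' hA hA'
    obtain ⟨hmA, hAeq⟩ := hmax_im _ hA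
    obtain ⟨hmA', hAeq'⟩ := hmax_im _ hA'
    have h := hS _ _ hmA hmA'
    rw [hAeq, hAeq', hcard, hcard, h]
end

section
/- Let F be a finite field and n a positive integer. The set of all matrices in M_n(F) whose first row is zero is a maximal independent set of the unit graph of M_n(F), and its cardinality is |F|^(n^2 - n). -/
open Pointwise

/-- For any row vector with a nonzero entry, there is an invertible matrix having it
as its `i0`-th row. -/
lemma exists_isUnit_of_row {F : Type*} [Field F] {n : ℕ} (i0 : Fin n) (r : Fin n → F)
    {j : Fin n} (hj : r j ≠ 0) :
    ∃ N : Matrix (Fin n) (Fin n) F, IsUnit N ∧ N i0 = r := by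
  classical
  set σ := Equiv.swap i0 j with hσ
  set N : Matrix (Fin n) (Fin n) F :=
    Matrix.of (fun i => if i = i0 then r else Pi.single (σ i) (1 : F)) with hN
  have hrow : ∀ i, N i = if i = i0 then r else Pi.single (σ i) (1 : F) := fun i => rfl
  refine ⟨N, ?_, by simp [hrow]⟩
  rw [← Matrix.linearIndependent_rows_iff_isUnit, Fintype.linearIndependent_iff]
  intro c hc
  have hc' : ∀ k, ∑ i, c i * N i k = 0 := by
    intro k
    have := congr_fun hc k
    simpa [Finset.sum_apply] using this
  have hσj : ∀ b, b ≠ i0 → σ b ≠ j := by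
    intro b hb h
    apply hb
    have : σ b = σ i0 := by rw [h, hσ, Equiv.swap_apply_left]
    exact σ.injective this
  have h0 : c i0 = 0 := by
    have := hc' j
    rw [Finset.sum_eq_single i0 ?_ (by simp)] at this
    · rw [hrow, if_pos rfl] at this
      exact (mul_eq_zero.1 this).resolve_right hj
    · intro b _ hb
      rw [hrow, if_neg hb, Pi.single_eq_of_ne (Ne.symm (hσj b hb))]
      ring
  intro i
  by_cases hi : i = i0
  · rw [hi]; exact h0
  · have := hc' (σ i)
    rw [Finset.sum_eq_single i ?_ (by simp)] at this
    · rwa [hrow, if_neg hi, Pi.single_eq_same, mul_one] at this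
    · intro b _ hb
      by_cases hb0 : b = i0
      · rw [hb0, h0, zero_mul]
      · rw [hrow, if_neg hb0, Pi.single_eq_of_ne (fun h => hb (σ.injective h).symm)]
        ring

theorem stmt_5 {F : Type*} [Field F] [Fintype F] (n : ℕ) (hn : 0 < n) :
    IsMaxIndepSet (unitGraph (Matrix (Fin n) (Fin n) F))
      {M | ∀ j, M ⟨0, hn⟩ j = 0} ∧
      Set.ncard {M : Matrix (Fin n) (Fin n) F | ∀ j, M ⟨0, hn⟩ j = 0} =
        Fintype.card F ^ (n ^ 2 - n) := by
  classical
  set i0 : Fin n := ⟨0, hn⟩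
  set A : Set (Matrix (Fin n) (Fin n) F) := {M | ∀ j, M i0 j = 0} with hA
  constructor
  · constructor
    · -- independence
      rintro X hX Y hY ⟨-, hu⟩
      have hdet : (X + Y).det = 0 :=
        Matrix.det_eq_zero_of_row_eq_zero i0 (fun j => by
          simp [Matrix.add_apply, hX j, hY j])
      rw [Matrix.isUnit_iff_isUnit_det, hdet] at hu
      exact hu.ne_zero rfl
    · -- maximality
      intro B hB hAB
      apply Set.Subset.antisymm hAB
      intro X hXB
      by_contra hXA
      have hXA' : ∃ j, X i0 j ≠ 0 := by
        by_contra h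
        push_neg at h
        exact hXA h
      obtain ⟨j, hj⟩ := hXA'
      obtain ⟨N, hNunit, hNrow⟩ := exists_isUnit_of_row i0 (X i0) hj
      set M : Matrix (Fin n) (Fin n) F := (N - X).updateRow i0 0 with hM
      have hMA : M ∈ A := by
        intro k
        simp [hM, Matrix.updateRow_self]
      have hXM : X + M = N := by
        ext i k
        by_cases hi : i = i0
        · subst hi
          simp [hM, Matrix.updateRow_self, ← hNrow]
        · simp [hM, Matrix.updateRow_ne hi, Matrix.sub_apply, Matrix.add_apply]
      have hne : X ≠ M := by
        intro h
        apply hj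
        rw [h]
        exact hMA j
      exact hB hXB (hAB hMA) ⟨hne, hXM ▸ hNunit⟩
  · -- cardinality
    have e : A ≃ ({i : Fin n // i ≠ i0} → Fin n → F) :=
      { toFun := fun M i j => M.1 i.1 j
        invFun := fun f => ⟨fun i j => if h : i = i0 then 0 else f ⟨i, h⟩ j,
          fun j => by simp⟩
        left_inv := by
          rintro ⟨M, hMem⟩
          ext i k
          by_cases hi : i = i0
          · subst hi; simp [hMem k]
          · simp [hi]
        right_inv := by
          intro f
          ext i k
          simp [i.2] }
    have h1 : A.ncard = Fintype.card ({i : Fin n // i ≠ i0} → Fin n → F) := by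
      rw [← Nat.card_coe_set_eq, Nat.card_congr e, Nat.card_eq_fintype_card]
    rw [h1, Fintype.card_fun]
    simp only [Fintype.card_fun, Fintype.card_fin]
    rw [Fintype.card_subtype_compl]
    simp only [Fintype.card_fin, Fintype.card_unique]
    rw [← pow_mul]
    congr 1
    rw [pow_two, Nat.mul_sub, mul_one]
end

section
/- Let F be a finite field of characteristic different from 2 and n a positive integer. Then the unit graph of M_n(F) is not well-covered. -/
open Pointwise

/-- Key lemma: any matrix can be made invertible by adding a `±1` diagonal matrix
(provided `2 ≠ 0`). -/
lemma exists_sign_diag {F : Type*} [Field F] (h2 : (2:F) ≠ 0) :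
    ∀ (n : ℕ) (M : Matrix (Fin n) (Fin n) F), ∃ d : Fin n → F,
      (∀ i, d i = 1 ∨ d i = -1) ∧ (M + Matrix.diagonal d).det ≠ 0 := by
  intro n
  induction n with
  | zero =>
    intro M
    exact ⟨fun i => 1, fun i => i.elim0, by simp [Matrix.det_fin_zero]⟩
  | succ n ih =>
    intro M
    obtain ⟨d', hd', hdet⟩ := ih (M.submatrix Fin.succ Fin.succ)
    set N : F → Matrix (Fin (n+1)) (Fin (n+1)) F :=
      fun x => M + Matrix.diagonal (Fin.cons x d') with hN
    set e0 : Fin (n+1) → F := Pi.single (0 : Fin (n+1)) (1:F) with he0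
    have hsplit : ∀ x : F, N x =
        Matrix.updateRow (N 0) 0 ((N 0) 0 + x • e0) := by
      intro x
      ext i j
      rcases eq_or_ne i 0 with rfl | hi
      · simp only [Matrix.updateRow_self, Pi.add_apply, Pi.smul_apply, he0, Pi.single_apply,
          hN, Matrix.add_apply, Matrix.diagonal_apply]
        rcases eq_or_ne (0 : Fin (n+1)) j with rfl | hj
        · simp [Fin.cons_zero]
        · simp [hj, (Ne.symm hj)]
      · obtain ⟨k, rfl⟩ := Fin.eq_succ_of_ne_zero hi
        simp only [Matrix.updateRow_ne (Fin.succ_ne_zero k), hN, Matrix.add_apply,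
          Matrix.diagonal_apply]
        rcases eq_or_ne (Fin.succ k) j with rfl | hj
        · simp [Fin.cons_succ]
        · simp [hj]
    have hsub : (Matrix.updateRow (N 0) 0 (e0)).submatrix
        Fin.succ Fin.succ = M.submatrix Fin.succ Fin.succ + Matrix.diagonal d' := by
      ext i j
      simp only [Matrix.submatrix_apply, Matrix.updateRow_ne (Fin.succ_ne_zero i), hN,
        Matrix.add_apply, Matrix.diagonal_apply, Fin.cons_succ, Fin.succ_inj]
    have hC : (Matrix.updateRow (N 0) 0 (e0)).det =
        (M.submatrix Fin.succ Fin.succ + Matrix.diagonal d').det := by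
      rw [Matrix.det_succ_row_zero]
      rw [Finset.sum_eq_single 0]
      · simp [hsub, Fin.succAbove_zero, he0]; rw [← he0, hsub]
      · intro b _ hb
        have : Matrix.updateRow (N 0) 0 e0 0 b = 0 := by
          rw [Matrix.updateRow_self, he0, Pi.single_eq_of_ne hb]
        rw [this]
        ring
      · intro h; exact absurd (Finset.mem_univ _) h
    have hdetx : ∀ x : F, (N x).det = (N 0).det +
        x * (M.submatrix Fin.succ Fin.succ + Matrix.diagonal d').det := by
      intro x
      rw [hsplit x, Matrix.det_updateRow_add, Matrix.updateRow_eq_self,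
        Matrix.det_updateRow_smul, hC]
    have key : (N 1).det ≠ 0 ∨ (N (-1)).det ≠ 0 := by
      by_contra h
      push_neg at h
      obtain ⟨e1, e2⟩ := h
      rw [hdetx 1] at e1
      rw [hdetx (-1)] at e2
      apply hdet
      have : (2:F) * (M.submatrix Fin.succ Fin.succ + Matrix.diagonal d').det = 0 := by
        linear_combination e1 - e2
      rcases mul_eq_zero.mp this with h | h
      · exact absurd h h2
      · exact h
    have signs : ∀ x : F, (x = 1 ∨ x = -1) →
        ∀ i, (Fin.cons x d' : Fin (n+1) → F) i = 1 ∨ (Fin.cons x d' : Fin (n+1) → F) i = -1 := by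
      intro x hx i
      induction i using Fin.cases with
      | zero => simpa using hx
      | succ j => simpa using hd' j
    rcases key with h | h
    · exact ⟨Fin.cons 1 d', signs 1 (Or.inl rfl), h⟩
    · exact ⟨Fin.cons (-1) d', signs (-1) (Or.inr rfl), h⟩

theorem stmt_6 {F : Type*} [Field F] [Fintype F] (hF : ringChar F ≠ 2)
    (n : ℕ) (hn : 0 < n) :
    ¬ WellCovered (unitGraph (Matrix (Fin n) (Fin n) F)) := by
  classical
  intro hW
  haveI : NeZero n := ⟨hn.ne'⟩
  -- 2 ≠ 0 in F
  have h2 : (2 : F) ≠ 0 := by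
    intro h
    have h' : ringChar F ∣ 2 := by
      have : ((2 : ℕ) : F) = 0 := by exact_mod_cast h
      exact (CharP.cast_eq_zero_iff F (ringChar F) 2).mp this
    rcases (Nat.prime_two.eq_one_or_self_of_dvd _ h') with h1 | h1
    · have : ((1 : ℕ) : F) = 0 :=
        (CharP.cast_eq_zero_iff F (ringChar F) 1).mpr (by rw [h1])
      simp at this
    · exact hF h1
  have hone : (1 : F) ≠ -1 := by
    intro h
    apply h2
    calc (2:F) = 1 + 1 := by norm_num
    _ = 1 + (-1) := by rw [← h]
    _ = 0 := by ring
  set G := unitGraph (Matrix (Fin n) (Fin n) F) with hG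
  have hAdj : ∀ x y : Matrix (Fin n) (Fin n) F,
      G.Adj x y ↔ x ≠ y ∧ IsUnit (x + y) := fun x y => Iff.rfl
  -- the set of ±1 diagonal matrices
  set D : Set (Matrix (Fin n) (Fin n) F) :=
    {A | ∃ d : Fin n → F, (∀ i, d i = 1 ∨ d i = -1) ∧ A = Matrix.diagonal d} with hD
  have hDind : IsIndepSet G D := by
    rintro x ⟨d, hd, rfl⟩ y ⟨e, he, rfl⟩ hadj
    rw [hAdj] at hadj
    obtain ⟨hxy, hu⟩ := hadj
    have hde : d ≠ e := fun h => hxy (by rw [h])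
    obtain ⟨i, hi⟩ := Function.ne_iff.mp hde
    rw [Matrix.diagonal_add, Matrix.isUnit_iff_isUnit_det, Matrix.det_diagonal] at hu
    have hzero : d i + e i = 0 := by
      rcases hd i with h1 | h1 <;> rcases he i with h2 | h2 <;>
        first
          | (exfalso; exact hi (h1.trans h2.symm))
          | (rw [h1, h2]; ring)
    have : (∏ j, (d j + e j)) = 0 :=
      Finset.prod_eq_zero (Finset.mem_univ i) hzero
    rw [this] at hu
    exact hu.ne_zero rfl
  have hDmax : IsMaxIndepSet G D := by
    refine ⟨hDind, fun B hB hDB => ?_⟩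
    refine Set.Subset.antisymm hDB fun M hM => ?_
    obtain ⟨d, hd, hdet⟩ := exists_sign_diag h2 n M
    by_contra hMD
    have hne' : M ≠ Matrix.diagonal d := fun h => hMD ⟨d, hd, h⟩
    have hadj : G.Adj M (Matrix.diagonal d) := by
      rw [hAdj]
      exact ⟨hne', (Matrix.isUnit_iff_isUnit_det _).mpr (isUnit_iff_ne_zero.mpr hdet)⟩
    exact hB hM (hDB ⟨d, hd, rfl⟩) hadj
  -- cardinality of D
  have hD2 : 2 ≤ D.ncard := by
    rw [← Nat.card_coe_set_eq]
    have m1 : (Matrix.diagonal (fun _ => (1:F)) : Matrix (Fin n) (Fin n) F) ∈ D :=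
      ⟨fun _ => 1, fun _ => Or.inl rfl, rfl⟩
    have m2 : (Matrix.diagonal (fun _ => (-1:F)) : Matrix (Fin n) (Fin n) F) ∈ D :=
      ⟨fun _ => -1, fun _ => Or.inr rfl, rfl⟩
    have hne12 : (Matrix.diagonal (fun _ => (1:F)) : Matrix (Fin n) (Fin n) F) ≠
        Matrix.diagonal (fun _ => (-1:F)) := by
      intro h
      apply hone
      have := congrFun (congrFun h 0) 0
      simpa [Matrix.diagonal_apply_eq] using this
    have : Nontrivial D := ⟨⟨⟨_, m1⟩, ⟨_, m2⟩, by simpa [Subtype.ext_iff] using hne12⟩⟩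
    exact Finite.one_lt_card_iff_nontrivial.mpr this
  have hDle : D.ncard ≤ 2 ^ n := by
    rw [← Nat.card_coe_set_eq]
    have : Nat.card D ≤ Nat.card (Fin n → Bool) := by
      apply Nat.card_le_card_of_injective
        (f := fun (M : D) (i : Fin n) => decide ((M : Matrix (Fin n) (Fin n) F) i i = 1))
      rintro ⟨M, d, hd, rfl⟩ ⟨M', e, he, rfl⟩ hfe
      have : d = e := by
        funext i
        have := congrFun hfe i
        simp only [Matrix.diagonal_apply_eq, decide_eq_decide] at this
        rcases hd i with h1 | h1 <;> rcases he i with h2 | h2 <;> rw [h1, h2] <;>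
          first
            | rfl
            | (exfalso; rw [h1, h2] at this; tauto)
      simp [this]
    simpa [Nat.card_eq_fintype_card] using this
  rcases eq_or_lt_of_le (show 1 ≤ n from hn) with h1 | h1
  · -- n = 1
    obtain rfl : n = 1 := h1.symm
    set A : Set (Matrix (Fin 1) (Fin 1) F) := {0} with hA
    have hAind : IsIndepSet G A := by
      rintro x rfl y rfl hadj
      rw [hAdj] at hadj
      exact hadj.1 rfl
    have hAmax : IsMaxIndepSet G A := by
      refine ⟨hAind, fun B hB hAB => ?_⟩
      refine Set.Subset.antisymm hAB fun M hM => ?_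
      by_contra hM0
      have hM0' : M ≠ 0 := hM0
      have hMd : M 0 0 ≠ 0 := by
        intro h
        apply hM0'
        ext i j
        rw [Subsingleton.elim i 0, Subsingleton.elim j 0, h]
        rfl
      have hadj : G.Adj 0 M := by
        rw [hAdj]
        refine ⟨(Ne.symm hM0'), ?_⟩
        rw [zero_add, Matrix.isUnit_iff_isUnit_det, Matrix.det_fin_one]
        exact isUnit_iff_ne_zero.mpr hMd
      exact hB (hAB rfl) hM hadj
    have := hW A D hAmax hDmax
    rw [Set.ncard_singleton] at this
    omega
  · -- n ≥ 2
    obtain ⟨m, rfl⟩ : ∃ m, n = m + 2 := ⟨n - 2, by omega⟩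
    set A₀ : Set (Matrix (Fin (m+2)) (Fin (m+2)) F) := {M | ∀ i, M i 0 = 0} with hA₀
    have hA₀ind : IsIndepSet G A₀ := by
      intro x hx y hy hadj
      rw [hAdj] at hadj
      obtain ⟨-, hu⟩ := hadj
      rw [Matrix.isUnit_iff_isUnit_det] at hu
      have : (x + y).det = 0 :=
        Matrix.det_eq_zero_of_column_eq_zero 0 fun i => by
          simp [Matrix.add_apply, hx i, hy i]
      rw [this] at hu
      exact hu.ne_zero rfl
    -- extend A₀ to a maximal independent set
    obtain ⟨A1, ⟨hA1ind, hA1sub⟩, hA1max⟩ :=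
      Set.Finite.exists_maximalFor id {B | IsIndepSet G B ∧ A₀ ⊆ B}
        (Set.toFinite _) ⟨A₀, hA₀ind, Set.Subset.rfl⟩
    simp only [id] at hA1max
    have hA1max' : IsMaxIndepSet G A1 := by
      refine ⟨hA1ind, fun B hB hAB => ?_⟩
      exact Set.Subset.antisymm hAB (hA1max ⟨hB, hA1sub.trans hAB⟩ hAB)
    -- lower bound on the cardinality of A1
    set ψ : (Fin (m+2) → F) → Matrix (Fin (m+2)) (Fin (m+2)) F :=
      fun v => Matrix.of (fun i j => if j = 1 then v i else 0) with hψ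
    have hψinj : Function.Injective ψ := by
      intro v w h
      funext i
      have := congrFun (congrFun h i) 1
      simpa [hψ] using this
    have hψrange : Set.range ψ ⊆ A₀ := by
      rintro _ ⟨v, rfl⟩ i
      have h01 : (0 : Fin (m+2)) ≠ 1 := Fin.ne_of_val_ne (by simp)
      simp [hψ, h01]
    have hcard : Fintype.card F ^ (m+2) ≤ A1.ncard := by
      have hr : (Set.range ψ).ncard = Fintype.card F ^ (m+2) := by
        rw [← Nat.card_coe_set_eq, Nat.card_range_of_injective hψinj]
        simp [Nat.card_eq_fintype_card]
      rw [← hr]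
      exact Set.ncard_le_ncard (hψrange.trans hA1sub) (Set.toFinite _)
    have hq : 3 ≤ Fintype.card F := by
      have h01 : (0:F) ≠ 1 := fun h => one_ne_zero h.symm
      have h02 : (0:F) ≠ 2 := fun h => h2 h.symm
      have h12 : (1:F) ≠ 2 := by
        intro h
        apply one_ne_zero (α := F)
        have : (2:F) - 1 = 1 := by ring
        rw [← this, ← h]
        ring
      have : ({0, 1, 2} : Finset F).card = 3 := by
        rw [Finset.card_insert_of_notMem (by simp [h01, h02]),
          Finset.card_insert_of_notMem (by simp [h12]), Finset.card_singleton]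
      calc (3:ℕ) = ({0, 1, 2} : Finset F).card := this.symm
      _ ≤ Fintype.card F := Finset.card_le_univ _
    have hpow : 2 ^ (m+2) < Fintype.card F ^ (m+2) :=
      lt_of_lt_of_le (Nat.pow_lt_pow_left (by norm_num) (by omega))
        (Nat.pow_le_pow_left hq _)
    have := hW A1 D hA1max' hDmax
    omega
end

section
/- Let R and S be finite rings with identity and let M be a maximal independent set of the unit graph of R consisting entirely of non-units of R. Then M × S is a maximal independent set of the unit graph of R × S. -/
open Pointwise

lemma aux_prod_isUnit {M N : Type*} [Monoid M] [Monoid N] {p : M × N} :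
    IsUnit p ↔ IsUnit p.1 ∧ IsUnit p.2 := by
  constructor
  · intro h
    exact ⟨h.map (MonoidHom.fst M N), h.map (MonoidHom.snd M N)⟩
  · rintro ⟨⟨u, hu⟩, ⟨v, hv⟩⟩
    exact ⟨⟨(u, v), (↑u⁻¹, ↑v⁻¹), by simp, by simp⟩, by simp [hu, hv]⟩

lemma aux_double {R : Type*} [Ring R] [Finite R] {m : R} (h : IsUnit (m + m)) :
    IsUnit m := by
  rw [isUnit_iff_mem_nonZeroDivisors_of_finite, mem_nonZeroDivisors_iff]
  refine ⟨fun z hz => ?_, ?_⟩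
  · obtain ⟨u, hu⟩ := h
    have : (u : R) * z = 0 := by rw [hu, add_mul, hz, add_zero]
    calc z = ↑u⁻¹ * (↑u * z) := by rw [← mul_assoc, Units.inv_mul, one_mul]
      _ = 0 := by rw [this, mul_zero]
  intro z hz
  have h2 : z * (m + m) = 0 := by rw [mul_add, hz, add_zero]
  obtain ⟨u, hu⟩ := h
  have : z * u = 0 := by rw [hu]; exact h2
  calc z = z * u * ↑u⁻¹ := by rw [mul_assoc, Units.mul_inv, mul_one]
    _ = 0 := by rw [this, zero_mul]

theorem stmt_7 {R S : Type*} [Ring R] [Ring S] [Finite R] [Finite S]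
    (M : Set R) (hM : IsMaxIndepSet (unitGraph R) M)
    (hMnu : ∀ m ∈ M, ¬ IsUnit m) :
    IsMaxIndepSet (unitGraph (R × S)) (M ×ˢ (Set.univ : Set S)) := by
  constructor
  · rintro ⟨x, s⟩ ⟨hxM, -⟩ ⟨y, t⟩ ⟨hyM, -⟩ ⟨hne, hu⟩
    have huR : IsUnit (x + y) := (aux_prod_isUnit.1 hu).1
    by_cases hxy : x = y
    · subst hxy
      exact hMnu x hxM (aux_double huR)
    · exact hM.1 hxM hyM ⟨hxy, huR⟩
  · intro B hB hMB
    ext ⟨x, s⟩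
    constructor
    · exact fun h => hMB h
    · intro hxB
      refine ⟨?_, Set.mem_univ _⟩
      by_contra hxM
      -- M ∪ {x} is not independent
      have hne : M ∪ {x} ≠ M := fun h => hxM (h ▸ Set.mem_union_right M rfl)
      have hnotindep : ¬ IsIndepSet (unitGraph R) (M ∪ {x}) := by
        intro hI
        exact hne (hM.2 _ hI Set.subset_union_left).symm
      -- so some m ∈ M is adjacent to x
      have : ∃ m ∈ M, (unitGraph R).Adj m x := by
        by_contra hcon
        push_neg at hcon
        apply hnotindep
        rintro a (haM | rfl) b (hbM | rfl) hadj
        · exact hM.1 haM hbM hadj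
        · exact hcon a haM hadj
        · exact hcon b hbM hadj.symm
        · exact hadj.1 rfl
      obtain ⟨m, hmM, hmx, humx⟩ := this
      have hmB : (m, 1 - s) ∈ B := hMB ⟨hmM, Set.mem_univ _⟩
      refine hB hmB hxB ⟨?_, ?_⟩
      · intro h; exact hmx (congrArg Prod.fst h)
      · rw [aux_prod_isUnit]
        exact ⟨humx, by simp⟩
end

section
/- Let R_1, ..., R_t be finite rings with identity such that 2 is a unit in each R_i, and for each i let M_i be a maximal independent set of the unit graph of R_i consisting entirely of units of R_i. Then M_1 × M_2 × ... × M_t is a maximal independent set of the unit graph of R_1 × ... × R_t. -/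
open Pointwise

lemma pi_isUnit_iff {ι : Type*} {S : ι → Type*} [∀ i, Monoid (S i)] {x : ∀ i, S i} :
    IsUnit x ↔ ∀ i, IsUnit (x i) := by
  constructor
  · intro h i
    exact h.map (Pi.evalMonoidHom S i)
  · intro h
    choose u hu using h
    exact ⟨⟨x, fun i => ((u i)⁻¹ : (S i)ˣ),
      funext fun i => by simp [← hu i],
      funext fun i => by simp [← hu i]⟩, rfl⟩

theorem stmt_8 {t : ℕ} (R : Fin t → Type*) [∀ i, Ring (R i)] [∀ i, Finite (R i)]
    (h2 : ∀ i, IsUnit (2 : R i)) (M : ∀ i, Set (R i))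
    (hM : ∀ i, IsMaxIndepSet (unitGraph (R i)) (M i))
    (hMu : ∀ i, ∀ m ∈ M i, IsUnit m) :
    IsMaxIndepSet (unitGraph (∀ i, R i)) (Set.pi Set.univ M) := by
  constructor
  · rintro x hx y hy ⟨hxy, hu⟩
    obtain ⟨i, hi⟩ := Function.ne_iff.mp hxy
    exact (hM i).1 (hx i (Set.mem_univ i)) (hy i (Set.mem_univ i))
      ⟨hi, (pi_isUnit_iff.mp hu) i⟩
  · intro B hB hsub
    refine Set.Subset.antisymm hsub ?_
    intro z hzB
    by_contra hzM
    have key : ∀ i, ∃ m ∈ M i, IsUnit (z i + m) := by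
      intro i
      by_cases hz : z i ∈ M i
      · refine ⟨z i, hz, ?_⟩
        have : IsUnit (2 * z i) := (h2 i).mul (hMu i _ hz)
        rwa [two_mul] at this
      · by_contra hno
        push_neg at hno
        have hind : IsIndepSet (unitGraph (R i)) (insert (z i) (M i)) := by
          rintro a ha b hb ⟨hab, hu⟩
          rcases ha with rfl | ha
          · rcases hb with rfl | hb
            · exact hab rfl
            · exact hno b hb hu
          · rcases hb with rfl | hb
            · exact hno a ha (by rwa [add_comm])
            · exact (hM i).1 ha hb ⟨hab, hu⟩
        have heq := (hM i).2 _ hind (Set.subset_insert _ _)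
        exact hz (heq ▸ Set.mem_insert (z i) (M i))
    choose x hxM hxu using key
    have hxmem : x ∈ Set.pi Set.univ M := fun i _ => hxM i
    have hne' : z ≠ x := by
      simp only [Set.mem_pi, Set.mem_univ, forall_true_left] at hzM
      push_neg at hzM
      obtain ⟨i, hi⟩ := hzM
      exact fun h => hi (h ▸ hxM i)
    exact hB hzB (hsub hxmem) ⟨hne', pi_isUnit_iff.mpr fun i => hxu i⟩
end

section
/- Let R be a finite ring with identity and let M be a subset of R whose image M̄ in R/J(R) is a maximal independent set of the unit graph of R/J(R) consisting entirely of non-units of R/J(R). Then M + J(R) is a maximal independent set of the unit graph of R, of cardinality |M̄|·|J(R)|. -/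
open Pointwise

lemma aux_left_inv_isUnit {R : Type*} [Monoid R] [Finite R] {x a : R} (h : a * x = 1) :
    IsUnit x := by
  have hinj : Function.Injective (fun m => x * m) := by
    intro m m' hm
    have h2 : a * (x * m) = a * (x * m') := by simpa using congrArg (a * ·) hm
    rwa [← mul_assoc, ← mul_assoc, h, one_mul, one_mul] at h2
  obtain ⟨b, hb⟩ := (Finite.injective_iff_surjective.mp hinj) 1
  have hb' : x * b = 1 := hb
  have hba : b = a := by
    calc b = 1 * b := (one_mul b).symm
    _ = (a * x) * b := by rw [h]
    _ = a * (x * b) := by rw [mul_assoc]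
    _ = a := by rw [hb', mul_one]
  exact isUnit_iff_exists.mpr ⟨b, hb', by rw [hba, h]⟩

lemma aux_unit_lift {R : Type*} [Ring R] [Finite R] {S : Type*} [Ring S] (π : R →+* S)
    (hsurj : Function.Surjective π)
    (hker : RingHom.ker π = Ideal.jacobson (⊥ : Ideal R)) (x : R) :
    IsUnit x ↔ IsUnit (π x) := by
  constructor
  · exact fun h => h.map π
  · rintro ⟨u, hu⟩
    obtain ⟨y, hy⟩ := hsurj (↑u⁻¹ : S)
    have hyx : y * x - 1 ∈ Ideal.jacobson (⊥ : Ideal R) := by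
      rw [← hker, RingHom.mem_ker]
      simp [map_sub, map_mul, ← hu, hy]
    obtain ⟨t, ht⟩ := Ideal.exists_mul_sub_mem_of_sub_one_mem_jacobson _ hyx
    rw [Ideal.mem_bot, sub_eq_zero, ← mul_assoc] at ht
    exact aux_left_inv_isUnit ht

lemma aux_two_unit {S : Type*} [Ring S] {a : S} (h : IsUnit (a + a)) : IsUnit a := by
  obtain ⟨u, hu⟩ := h
  have h2 : (2 : S) * a = ↑u := by rw [two_mul, hu]
  have h2' : a * (2 : S) = ↑u := by rw [mul_two, hu]
  refine isUnit_iff_exists.mpr ⟨2 * ↑u⁻¹, ?_, ?_⟩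
  · rw [← mul_assoc, h2']; exact u.mul_inv
  · have : (2 : S) * (↑u⁻¹ : S) = ↑u⁻¹ * 2 := by
      rw [two_mul, mul_two]
    rw [this, mul_assoc, h2]; exact u.inv_mul

lemma aux_card_preimage {R : Type*} [Ring R] {S : Type*} [Ring S] (π : R →+* S)
    (hsurj : Function.Surjective π) (T : Set S) :
    (π ⁻¹' T).ncard = T.ncard * ((RingHom.ker π : Set R)).ncard := by
  classical
  have hg : ∀ s, π (Function.surjInv hsurj s) = s := Function.surjInv_eq hsurj
  set g := Function.surjInv hsurj with hgdef
  have key : Nat.card (π ⁻¹' T) = Nat.card (T × ((RingHom.ker π : Set R))) := by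
    apply Nat.card_congr
    refine ⟨fun x => (⟨π x, x.2⟩, ⟨(x : R) - g (π x), ?_⟩),
      fun p => ⟨g p.1 + p.2, ?_⟩, ?_, ?_⟩
    · simp [RingHom.mem_ker, map_sub, hg]
    · have hk : π (p.2 : R) = 0 := RingHom.mem_ker.mp p.2.2
      simp [Set.mem_preimage, map_add, hg, hk, p.1.2]
    · rintro ⟨x, hx⟩
      simp only [Subtype.mk.injEq]
      abel
    · rintro ⟨⟨t, ht⟩, ⟨k, hk⟩⟩
      have hk0 : π k = 0 := RingHom.mem_ker.mp hk
      have hπ : π (g t + k) = t := by simp [map_add, hg, hk0]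
      simp only [Prod.mk.injEq, Subtype.mk.injEq]
      refine ⟨hπ, ?_⟩
      rw [hπ]
      abel
  rw [← Nat.card_coe_set_eq, ← Nat.card_coe_set_eq, ← Nat.card_coe_set_eq,
    key, Nat.card_prod]

theorem stmt_9 {R : Type*} [Ring R] [Finite R]
    {S : Type*} [Ring S] (π : R →+* S) (hsurj : Function.Surjective π)
    (hker : RingHom.ker π = Ideal.jacobson (⊥ : Ideal R))
    (M : Set R) (hM : IsMaxIndepSet (unitGraph S) (π '' M))
    (hMnu : ∀ m ∈ π '' M, ¬ IsUnit m) :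
    IsMaxIndepSet (unitGraph R) (M + ((Ideal.jacobson (⊥ : Ideal R) : Ideal R) : Set R)) ∧
      (M + ((Ideal.jacobson (⊥ : Ideal R) : Ideal R) : Set R)).ncard =
        (π '' M).ncard * ((Ideal.jacobson (⊥ : Ideal R) : Ideal R) : Set R).ncard := by
  set J : Set R := ((Ideal.jacobson (⊥ : Ideal R) : Ideal R) : Set R) with hJdef
  have hAeq : M + J = π ⁻¹' (π '' M) := by
    ext x
    constructor
    · rintro ⟨m, hm, j, hj, rfl⟩
      have hj0 : π j = 0 := by
        rw [← RingHom.mem_ker, hker]; exact hj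
      exact ⟨m, hm, by simp [map_add, hj0]⟩
    · rintro ⟨m, hm, hmx⟩
      refine ⟨m, hm, x - m, ?_, by show m + (x - m) = x; rw [add_comm, sub_add_cancel]⟩
      rw [hJdef]
      show x - m ∈ Ideal.jacobson (⊥ : Ideal R)
      rw [← hker, RingHom.mem_ker, map_sub, hmx, sub_self]
  have hindep : IsIndepSet (unitGraph R) (M + J) := by
    rintro x hx y hy ⟨hxy, hu⟩
    rw [hAeq] at hx hy
    have hux : IsUnit (π x + π y) := by
      rw [← map_add]; exact (aux_unit_lift π hsurj hker _).mp hu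
    by_cases h : π x = π y
    · rw [← h] at hux
      exact hMnu _ hx (aux_two_unit hux)
    · exact hM.1 hx hy ⟨h, hux⟩
  have hmax : ∀ B, IsIndepSet (unitGraph R) B → M + J ⊆ B → M + J = B := by
    intro B hB hAB
    have hBind : IsIndepSet (unitGraph S) (π '' B) := by
      rintro s ⟨x, hx, rfl⟩ t ⟨y, hy, rfl⟩ ⟨hst, hu⟩
      have hxy : x ≠ y := fun h => hst (by rw [h])
      exact hB hx hy ⟨hxy, (aux_unit_lift π hsurj hker _).mpr (by rwa [map_add])⟩
    have hMA : M ⊆ M + J := fun m hm => ⟨m, hm, 0, SetLike.mem_coe.mpr (Submodule.zero_mem _), add_zero m⟩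
    have hsub : π '' M ⊆ π '' B := Set.image_mono (f := π) (hMA.trans hAB)
    have heq : π '' M = π '' B := hM.2 _ hBind hsub
    refine Set.Subset.antisymm hAB ?_
    intro b hb
    rw [hAeq]
    show π b ∈ π '' M
    rw [heq]
    exact ⟨b, hb, rfl⟩
  refine ⟨⟨hindep, hmax⟩, ?_⟩
  rw [hAeq, aux_card_preimage π hsurj]
  congr 1
  rw [hker]
end

section
/- Let R be a finite ring with identity such that 2 is a unit in R, and let M̄ be a maximal independent set of the unit graph of R/J(R) consisting entirely of units of R/J(R). Then any complete set M of representatives in R of the cosets in M̄ is a maximal independent set of the unit graph of R with |M| = |M̄|. -/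
open Pointwise

/-- In a finite monoid, a left inverse makes an element a unit. -/
lemma aux_isUnit_of_left_inv {R : Type*} [Monoid R] [Finite R] {s r : R}
    (h : s * r = 1) : IsUnit r := by
  have hinj : Function.Injective (fun a : R => r * a) := by
    intro a b hab
    have : s * (r * a) = s * (r * b) := by simp [hab]
    simpa [← mul_assoc, h] using this
  obtain ⟨t, ht⟩ := (Finite.injective_iff_surjective.mp hinj) 1
  simp only at ht
  have hts : t = s := by
    have : s * (r * t) = s := by rw [ht, mul_one]
    rw [← mul_assoc, h, one_mul] at this
    exact this
  exact ⟨⟨r, t, ht, by rw [hts, h]⟩, rfl⟩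

lemma aux_one_add_jac {R : Type*} [Ring R] [Finite R] {j : R}
    (hj : j ∈ Ideal.jacobson (⊥ : Ideal R)) : IsUnit (1 + j) := by
  obtain ⟨s, hs⟩ := Ideal.exists_mul_sub_mem_of_sub_one_mem_jacobson (1 + j)
    (by simpa using hj)
  rw [Ideal.mem_bot, sub_eq_zero] at hs
  exact aux_isUnit_of_left_inv hs

lemma aux_unit_add_jac {R : Type*} [Ring R] [Finite R] {u j : R}
    (hu : IsUnit u) (hj : j ∈ Ideal.jacobson (⊥ : Ideal R)) : IsUnit (u + j) := by
  obtain ⟨v, rfl⟩ := hu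
  have : (v : R) + j = v * (1 + (↑v⁻¹ : R) * j) := by
    rw [mul_add, mul_one, ← mul_assoc, Units.mul_inv, one_mul]
  rw [this]
  exact (Units.isUnit v).mul (aux_one_add_jac (Ideal.mul_mem_left _ _ hj))

theorem stmt_10 {R : Type*} [Ring R] [Finite R] (h2 : IsUnit (2 : R))
    {S : Type*} [Ring S] (π : R →+* S) (hsurj : Function.Surjective π)
    (hker : RingHom.ker π = Ideal.jacobson (⊥ : Ideal R))
    (Mbar : Set S) (hMbar : IsMaxIndepSet (unitGraph S) Mbar)
    (hMu : ∀ m ∈ Mbar, IsUnit m)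
    (M : Set R) (hrep : Set.InjOn π M) (himg : π '' M = Mbar) :
    IsMaxIndepSet (unitGraph R) M ∧ M.ncard = Mbar.ncard := by
  -- lifting units along π
  have hlift : ∀ x : R, IsUnit (π x) → IsUnit x := by
    intro x hx
    obtain ⟨u, hu⟩ := hx
    obtain ⟨y, hy⟩ := hsurj (↑u⁻¹ : S)
    have hxy : x * y - 1 ∈ Ideal.jacobson (⊥ : Ideal R) := by
      rw [← hker, RingHom.mem_ker]
      simp [hy, ← hu, Units.mul_inv]
    have hyx : y * x - 1 ∈ Ideal.jacobson (⊥ : Ideal R) := by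
      rw [← hker, RingHom.mem_ker]
      simp [hy, ← hu, Units.inv_mul]
    have h1 : IsUnit (x * y) := by
      have := aux_one_add_jac hxy
      simpa using this
    have h2' : IsUnit (y * x) := by
      have := aux_one_add_jac hyx
      simpa using this
    obtain ⟨v, hv⟩ := h1
    obtain ⟨w, hw⟩ := h2'
    -- x * (y * v⁻¹) = 1 and (w⁻¹ * y) * x = 1
    have hr : x * (y * ↑v⁻¹) = 1 := by
      rw [← mul_assoc, ← hv, Units.mul_inv]
    have hl : (↑w⁻¹ * y) * x = 1 := by
      rw [mul_assoc, ← hw, Units.inv_mul]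
    exact aux_isUnit_of_left_inv hl
  -- M is independent
  have hindep : IsIndepSet (unitGraph R) M := by
    rintro x hx y hy ⟨hne, hu⟩
    have hpne : π x ≠ π y := fun h => hne (hrep hx hy h)
    exact hMbar.1 (himg ▸ Set.mem_image_of_mem π hx)
      (himg ▸ Set.mem_image_of_mem π hy)
      ⟨hpne, by rw [← map_add]; exact hu.map π⟩
  refine ⟨⟨hindep, ?_⟩, ?_⟩
  · intro B hB hMB
    refine Set.Subset.antisymm hMB fun b hb => ?_
    -- Step 1: π b ∈ Mbar
    have hπb : π b ∈ Mbar := by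
      by_contra hnb
      have hni : ¬ IsIndepSet (unitGraph S) (insert (π b) Mbar) := by
        intro hi
        have := hMbar.2 _ hi (Set.subset_insert _ _)
        exact hnb (this ▸ Set.mem_insert _ _)
      simp only [IsIndepSet, not_forall, not_not] at hni
      obtain ⟨x, hx, y, hy, hadj⟩ := hni
      -- one of x, y is π b, the other in Mbar (wlog via cases)
      have key : ∃ mb ∈ Mbar, (unitGraph S).Adj (π b) mb := by
        rcases hx with rfl | hx
        · rcases hy with rfl | hy
          · exact absurd rfl hadj.1
          · exact ⟨y, hy, hadj⟩
        · rcases hy with rfl | hy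
          · exact ⟨x, hx, hadj.symm⟩
          · exact absurd hadj (hMbar.1 hx hy)
      obtain ⟨mb, hmb, hne, hu⟩ := key
      obtain ⟨m, hm, rfl⟩ := himg ▸ hmb
      have hbm : IsUnit (b + m) := hlift _ (by rw [map_add]; exact hu)
      have : b ≠ m := fun h => hne (by rw [h])
      exact hB hb (hMB hm) ⟨this, hbm⟩
    -- Step 2: b equals its representative
    obtain ⟨m, hm, hπm⟩ := himg ▸ hπb
    by_cases hbm : b = m
    · rwa [hbm]
    · exfalso
      have hmj : b - m ∈ Ideal.jacobson (⊥ : Ideal R) := by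
        rw [← hker, RingHom.mem_ker, map_sub, hπm, sub_self]
      have hmu : IsUnit m := hlift m (hπm ▸ hMu _ hπb)
      have h2m : IsUnit (2 * m) := h2.mul hmu
      have : IsUnit (b + m) := by
        have := aux_unit_add_jac h2m hmj
        have he : 2 * m + (b - m) = b + m := by rw [two_mul]; abel
        rwa [he] at this
      exact hB hb (hMB hm) ⟨hbm, this⟩
  · rw [← himg, Set.ncard_image_of_injOn hrep]
end

section
/- Let S be a finite semisimple ring and y a nonzero non-unit element of S. Then there exists a non-unit z in S such that y + z is a unit of S. -/
open Pointwise

theorem aux_ss {S : Type*} [Ring S] [Finite S] [Nontrivial S]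
    (hss : Ideal.jacobson (⊥ : Ideal S) = ⊥) : IsSemisimpleRing S := by
  have : Finite (Ideal S) := Finite.of_injective _ SetLike.coe_injective
  let f : S →ₗ[S] (∀ I : {I : Ideal S // I.IsMaximal}, S ⧸ I.1) :=
    LinearMap.pi fun I => I.1.mkQ
  have hker : LinearMap.ker f = ⊥ := by
    rw [LinearMap.ker_pi]
    simp_rw [Submodule.ker_mkQ]
    refine le_antisymm ?_ bot_le
    rw [← hss, Ideal.jacobson]
    refine le_sInf fun J hJ => iInf_le_of_le ⟨J, hJ.2⟩ le_rfl
  have hsemis : ∀ I : {I : Ideal S // I.IsMaximal}, IsSemisimpleModule S (S ⧸ I.1) := fun I => by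
    have : IsSimpleModule S (S ⧸ I.1) := isSimpleModule_iff_isCoatom.mpr I.2.out
    infer_instance
  have hpi : IsSemisimpleModule S (∀ I : {I : Ideal S // I.IsMaximal}, S ⧸ I.1) := by
    classical
    exact isSemisimpleModule_of_isSemisimpleModule_submodule'
      (p := (LinearMap.range <| LinearMap.single _ _ ·))
      (fun i => have := hsemis i; .range _)
      (by simp_rw [LinearMap.range_eq_map, Submodule.iSup_map_single, Submodule.pi_top])
  have e := LinearEquiv.ofInjective f (LinearMap.ker_eq_bot.mp hker)
  have : IsSemisimpleModule S (LinearMap.range f) := inferInstance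
  exact IsSemisimpleModule.congr (M := LinearMap.range f) e

/-- Every `S`-linear endomorphism of `S` is right multiplication by its value at 1. -/
theorem endo_apply_eq {S : Type*} [Ring S] (g : S →ₗ[S] S) (x : S) : g x = x * g 1 := by
  conv_lhs => rw [← mul_one x, ← smul_eq_mul, g.map_smul, smul_eq_mul]

theorem key_lemma {S : Type*} [Ring S] [IsSemisimpleRing S] (y : S) (hy0 : y ≠ 0) :
    ∃ u : S, IsUnit u ∧ ∃ v : S, v ≠ 0 ∧ v * u = v * y := by
  classical
  set f : S →ₗ[S] S := LinearMap.toSpanSingleton S S y with hfdef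
  have hf : ∀ x : S, f x = x * y := fun x => by
    rw [hfdef, LinearMap.toSpanSingleton_apply, smul_eq_mul]
  obtain ⟨C, hC⟩ := exists_isCompl (LinearMap.ker f)
  have hCne : C ≠ ⊥ := by
    intro h
    rw [h] at hC
    have : LinearMap.ker f = ⊤ := by
      simpa using hC.codisjoint.eq_top
    apply hy0
    have h1 : (1 : S) ∈ LinearMap.ker f := this ▸ Submodule.mem_top
    simpa [hf] using h1
  obtain ⟨V, hVC, hVsimple⟩ := (IsSemisimpleModule.eq_bot_or_exists_simple_le C).resolve_left hCne
  have hVatom : IsAtom V := isSimpleModule_iff_isAtom.mp hVsimple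
  -- injectivity of f on V
  have hinj : ∀ v ∈ V, v * y = 0 → v = 0 := by
    intro v hv h0
    exact (Submodule.disjoint_def.mp hC.disjoint) v (by simp [LinearMap.mem_ker, hf, h0]) (hVC hv)
  set W : Submodule S S := V.map f with hWdef
  -- the isomorphism `e : V ≃ W` induced by `f`
  let f' : V →ₗ[S] W := (f.domRestrict V).codRestrict W fun v =>
    Submodule.mem_map_of_mem v.2
  have hf'c : ∀ v : V, (f' v : S) = (v : S) * y := fun v => hf v
  have hbij : Function.Bijective f' := by
    constructor
    · intro v w h
      have h2 : (v : S) * y = (w : S) * y := by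
        rw [← hf'c, ← hf'c, h]
      have : ((v : S) - w) * y = 0 := by rw [sub_mul, h2, sub_self]
      have := hinj _ (V.sub_mem v.2 w.2) this
      exact Subtype.ext (sub_eq_zero.mp this)
    · rintro ⟨w, hw⟩
      obtain ⟨v, hv, hvw⟩ := hw
      exact ⟨⟨v, hv⟩, Subtype.ext hvw⟩
  let e : V ≃ₗ[S] W := LinearEquiv.ofBijective f' hbij
  have hec : ∀ v : V, (e v : S) = (v : S) * y := fun v => hf'c v
  have hWsimple : IsSimpleModule S W := IsSimpleModule.congr e.symm
  have hWatom : IsAtom W := isSimpleModule_iff_isAtom.mp hWsimple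
  obtain ⟨v₀, hv₀V, hv₀⟩ := Submodule.exists_mem_ne_zero_of_ne_bot hVatom.1
  by_cases hVW : V = W
  · -- Case 1 : f maps V to itself
    let ee : V →ₗ[S] V := (f.domRestrict V).codRestrict V fun v =>
      hVW.ge (Submodule.mem_map_of_mem v.2)
    have heec : ∀ v : V, (ee v : S) = (v : S) * y := fun v => hf v
    have heebij : Function.Bijective ee := by
      constructor
      · intro v w h
        have h2 : (v : S) * y = (w : S) * y := by rw [← heec, ← heec, h]
        have : ((v : S) - w) * y = 0 := by rw [sub_mul, h2, sub_self]
        have := hinj _ (V.sub_mem v.2 w.2) this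
        exact Subtype.ext (by rw [← sub_eq_zero]; exact this)
      · rintro ⟨v, hv⟩
        obtain ⟨w, hwV, hwv⟩ := Submodule.mem_map.mp (hVW.le hv)
        exact ⟨⟨w, hwV⟩, Subtype.ext hwv⟩
    let E : V ≃ₗ[S] V := LinearEquiv.ofBijective ee heebij
    obtain ⟨P, hP⟩ := exists_isCompl V
    let π : S →ₗ[S] V := Submodule.linearProjOfIsCompl V P hP
    let U : S →ₗ[S] S := V.subtype ∘ₗ (E : V →ₗ[S] V) ∘ₗ π + (LinearMap.id - V.subtype ∘ₗ π)
    let U' : S →ₗ[S] S := V.subtype ∘ₗ (E.symm : V →ₗ[S] V) ∘ₗ π + (LinearMap.id - V.subtype ∘ₗ π)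
    have hUx : ∀ x : S, U x = (E (π x) : S) + (x - (π x : S)) := fun x => rfl
    have hU'x : ∀ x : S, U' x = (E.symm (π x) : S) + (x - (π x : S)) := fun x => rfl
    have hπc : ∀ v : V, π (v : S) = v := fun v => Submodule.linearProjOfIsCompl_apply_left hP v
    have hUU' : ∀ x : S, U (U' x) = x := by
      intro x
      rw [hU'x, hUx]
      have hπ : π ((E.symm (π x) : S) + (x - (π x : S))) = E.symm (π x) := by
        rw [map_add, map_sub, hπc]
        simp [hπc]
      rw [hπ]
      simp
    have hU'U : ∀ x : S, U' (U x) = x := by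
      intro x
      rw [hU'x, hUx]
      have hπ : π ((E (π x) : S) + (x - (π x : S))) = E (π x) := by
        rw [map_add, map_sub, hπc]
        simp [hπc]
      rw [hπ]
      simp
    have hUmul : ∀ x : S, x * U 1 = U x := fun x => (endo_apply_eq U x).symm
    set u := U 1 with hu
    have hUsurj : (U' 1) * u = 1 := by rw [hUmul, hUU']
    have hUinj : Function.Injective U := by
      intro s t h
      have := congrArg U' h
      rwa [hU'U, hU'U] at this
    have huunit : IsUnit u := by
      refine ⟨⟨u, U' 1, ?_, hUsurj⟩, rfl⟩
      have h0 : U (u * U' 1 - 1) = U 0 := by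
        rw [map_zero, ← hUmul (u * U' 1 - 1), sub_mul, one_mul, mul_assoc, hUsurj, mul_one,
          sub_self]
      have := hUinj h0
      rwa [sub_eq_zero] at this
    refine ⟨u, huunit, v₀, hv₀, ?_⟩
    rw [hUmul v₀, hUx]
    have : π v₀ = ⟨v₀, hv₀V⟩ := hπc ⟨v₀, hv₀V⟩
    rw [this]
    have : (E ⟨v₀, hv₀V⟩ : S) = v₀ * y := heec _
    rw [this]
    simp
  · -- Case 2 : V and W are distinct atoms, hence disjoint
    have hdVW : Disjoint V W := hVatom.disjoint_of_ne hWatom hVW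
    obtain ⟨Q, hQ⟩ := exists_isCompl (V ⊔ W)
    have mkCompl : ∀ X Y : Submodule S S, Disjoint X Y → IsCompl (X ⊔ Y) Q →
        IsCompl X (Y ⊔ Q) := by
      intro X Y hd hc
      constructor
      · have h1 : (Y ⊔ Q) ⊓ (X ⊔ Y) = Y := by
          rw [sup_comm X Y, sup_inf_assoc_of_le Q (le_sup_left : Y ≤ Y ⊔ X)]
          rw [show Q ⊓ (Y ⊔ X) = ⊥ from (hc.disjoint.symm.mono_right (le_of_eq (sup_comm Y X))).eq_bot]
          exact sup_bot_eq Y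
        rw [disjoint_iff]
        calc X ⊓ (Y ⊔ Q) = X ⊓ ((Y ⊔ Q) ⊓ (X ⊔ Y)) := by
              rw [inf_comm (Y ⊔ Q) (X ⊔ Y), ← inf_assoc,
                inf_eq_left.mpr (le_sup_left : X ≤ X ⊔ Y)]
          _ = X ⊓ Y := by rw [h1]
          _ = ⊥ := hd.eq_bot
      · rw [codisjoint_iff, ← sup_assoc]
        exact hc.codisjoint.eq_top
    have hcV : IsCompl V (W ⊔ Q) := mkCompl V W hdVW hQ
    have hcW : IsCompl W (V ⊔ Q) := mkCompl W V hdVW.symm (by rwa [sup_comm W V])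
    let π : S →ₗ[S] V := Submodule.linearProjOfIsCompl V (W ⊔ Q) hcV
    let ρ : S →ₗ[S] W := Submodule.linearProjOfIsCompl W (V ⊔ Q) hcW
    let A : S →ₗ[S] S := f ∘ₗ V.subtype ∘ₗ π
    let B : S →ₗ[S] S := V.subtype ∘ₗ (e.symm : W →ₗ[S] V) ∘ₗ ρ
    have hAx : ∀ x : S, A x = ((π x : S)) * y := fun x => hf _
    have hBx : ∀ x : S, B x = ((e.symm (ρ x) : S)) := fun x => rfl
    set a := A 1 with hadef
    set b := B 1 with hbdef
    have hmulA : ∀ x : S, x * a = A x := fun x => (endo_apply_eq A x).symm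
    have hmulB : ∀ x : S, x * b = B x := fun x => (endo_apply_eq B x).symm
    have hπV : ∀ v : V, π (v : S) = v := fun v => Submodule.linearProjOfIsCompl_apply_left hcV v
    have hρW : ∀ w : W, ρ (w : S) = w := fun w => Submodule.linearProjOfIsCompl_apply_left hcW w
    have hπW : ∀ x : S, x ∈ W → π x = 0 := fun x hx =>
      Submodule.linearProjOfIsCompl_apply_right' hcV (Submodule.mem_sup_left hx)
    have hρV : ∀ x : S, x ∈ V → ρ x = 0 := fun x hx =>
      Submodule.linearProjOfIsCompl_apply_right' hcW (Submodule.mem_sup_left hx)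
    have haW : a ∈ W := by
      have h1 : f ((π 1 : S)) ∈ W := Submodule.mem_map_of_mem (π 1).2
      rw [hf] at h1
      rw [hadef, hAx]
      exact h1
    have haa : a * a = 0 := by
      rw [hmulA, hAx, hπW a haW]
      simp
    have hbV : b ∈ V := by
      rw [hbdef, hBx]
      exact (e.symm (ρ 1)).2
    have hbb : b * b = 0 := by
      rw [hmulB, hBx, hρV b hbV]
      simp
    have hua : IsUnit (1 + a) := by
      refine ⟨⟨1 + a, 1 - a, ?_, ?_⟩, rfl⟩
      · simp only [mul_sub, sub_mul, mul_add, add_mul, one_mul, mul_one, haa]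
        abel
      · simp only [mul_sub, sub_mul, mul_add, add_mul, one_mul, mul_one, haa]
        abel
    have hub : IsUnit (1 - b) := by
      refine ⟨⟨1 - b, 1 + b, ?_, ?_⟩, rfl⟩
      · simp only [mul_sub, sub_mul, mul_add, add_mul, one_mul, mul_one, hbb]
        abel
      · simp only [mul_sub, sub_mul, mul_add, add_mul, one_mul, mul_one, hbb]
        abel
    set u := (1 + a) * (1 - b) * (1 + a) with hudef
    have huunit : IsUnit u := (hua.mul hub).mul hua
    refine ⟨u, huunit, v₀, hv₀, ?_⟩
    -- step by step computation
    have hya : v₀ * y * a = 0 := by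
      have hmem : v₀ * y ∈ W := by
        have := Submodule.mem_map_of_mem (f := f) hv₀V
        rwa [hf] at this
      rw [hmulA, hAx, hπW _ hmem]
      simp
    have hva : v₀ * a = v₀ * y := by
      rw [hmulA, hAx, hπV ⟨v₀, hv₀V⟩]
    have hvb : v₀ * b = 0 := by
      rw [hmulB, hBx, hρV v₀ hv₀V]
      simp
    have hyb : v₀ * y * b = v₀ := by
      have hmem : v₀ * y ∈ W := by
        have := Submodule.mem_map_of_mem (f := f) hv₀V
        rwa [hf] at this
      rw [hmulB, hBx, hρW ⟨v₀ * y, hmem⟩]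
      have : e ⟨v₀, hv₀V⟩ = ⟨v₀ * y, hmem⟩ := Subtype.ext (hec ⟨v₀, hv₀V⟩)
      rw [← this, LinearEquiv.symm_apply_apply]
    rw [hudef]
    rw [← mul_assoc, ← mul_assoc]
    have s1 : v₀ * (1 + a) = v₀ + v₀ * y := by rw [mul_add, mul_one, hva]
    have s2 : (v₀ + v₀ * y) * (1 - b) = v₀ * y := by
      rw [add_mul, mul_sub, mul_sub, mul_one, mul_one, hvb, hyb]
      abel
    have s3 : (v₀ * y) * (1 + a) = v₀ * y := by
      rw [mul_add, mul_one, hya, add_zero]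
    rw [s1, s2, s3]

theorem stmt_12 {S : Type*} [Ring S] [Finite S]
    (hss : Ideal.jacobson (⊥ : Ideal S) = ⊥)
    (y : S) (hy0 : y ≠ 0) (hy : ¬ IsUnit y) :
    ∃ z : S, ¬ IsUnit z ∧ IsUnit (y + z) := by
  have hnt : Nontrivial S := ⟨⟨y, 0, hy0⟩⟩
  have hssr : IsSemisimpleRing S := aux_ss hss
  obtain ⟨u, hu, v, hv0, hvu⟩ := key_lemma y hy0
  refine ⟨u - y, ?_, ?_⟩
  · intro hz
    obtain ⟨b, hb⟩ := hz.exists_right_inv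
    apply hv0
    have h1 : v * (u - y) = 0 := by rw [mul_sub, hvu, sub_self]
    calc v = v * ((u - y) * b) := by rw [hb, mul_one]
    _ = v * (u - y) * b := by rw [mul_assoc]
    _ = 0 := by rw [h1, zero_mul]
  · have : y + (u - y) = u := by abel
    rwa [this]
end

section
/- Let F be a finite field and Y a nonzero singular n-by-n matrix over F. Then there exists a singular n-by-n matrix Z over F such that Y + Z is invertible. -/
open Pointwise

theorem stmt_14 {F : Type*} [Field F] [Fintype F] {n : ℕ}
    (Y : Matrix (Fin n) (Fin n) F) (hY0 : Y ≠ 0) (hY : ¬ IsUnit Y) :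
    ∃ Z : Matrix (Fin n) (Fin n) F, ¬ IsUnit Z ∧ IsUnit (Y + Z) := by
  classical
  obtain ⟨L, L', D, hD⟩ := Matrix.Pivot.exists_list_transvec_mul_diagonal_mul_list_transvec Y
  set P := (L.map Matrix.TransvectionStruct.toMatrix).prod with hPdef
  set Q := (L'.map Matrix.TransvectionStruct.toMatrix).prod with hQdef
  have hPdet : P.det = 1 := Matrix.TransvectionStruct.det_toMatrix_prod L
  have hQdet : Q.det = 1 := Matrix.TransvectionStruct.det_toMatrix_prod L'
  have unit_iff : ∀ M : Matrix (Fin n) (Fin n) F, IsUnit M ↔ M.det ≠ 0 := fun M => by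
    rw [Matrix.isUnit_iff_isUnit_det, isUnit_iff_ne_zero]
  -- some diagonal entry of D is zero
  have hDzero : ∃ i, D i = 0 := by
    by_contra h
    push_neg at h
    apply hY
    rw [unit_iff, hD, Matrix.det_mul, Matrix.det_mul, hPdet, hQdet, Matrix.det_diagonal]
    simp only [one_mul, mul_one]
    exact Finset.prod_ne_zero_iff.2 fun i _ => h i
  obtain ⟨i0, hi0⟩ := hDzero
  -- some diagonal entry of D is nonzero
  have hDne : ∃ j, D j ≠ 0 := by
    by_contra h
    push_neg at h
    apply hY0
    have : D = 0 := funext h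
    rw [hD, this, show Matrix.diagonal (0 : Fin n → F) = 0 from Matrix.diagonal_zero,
      mul_zero, zero_mul]
  obtain ⟨j0, hj0⟩ := hDne
  set E : Fin n → F := fun i => if D i = 0 then 1 else 0 with hEdef
  refine ⟨P * Matrix.diagonal E * Q, ?_, ?_⟩
  · rw [unit_iff]
    simp only [Matrix.det_mul, hPdet, hQdet, Matrix.det_diagonal, one_mul, mul_one, ne_eq,
      not_not]
    exact Finset.prod_eq_zero (Finset.mem_univ j0) (by simp [hEdef, hj0])
  · have : Y + P * Matrix.diagonal E * Q = P * Matrix.diagonal (D + E) * Q := by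
      have hde : Matrix.diagonal (D + E) = Matrix.diagonal D + Matrix.diagonal E :=
        (Matrix.diagonal_add D E).symm
      rw [hD, hde, mul_add, add_mul]
    rw [this, unit_iff, Matrix.det_mul, Matrix.det_mul, hPdet, hQdet, Matrix.det_diagonal]
    simp only [one_mul, mul_one]
    refine Finset.prod_ne_zero_iff.2 fun i _ => ?_
    by_cases h : D i = 0 <;> simp [hEdef, h, Pi.add_apply]
end
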